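/- Let ψ : ℝ → ℝ be four times continuously differentiable on a neighborhood of a point ϑ* with ψ'(ϑ*) = 0 and ψ''(ϑ*) > 0. Define A₁ := √(2/ψ''(ϑ*)), A₂ := −ψ'''(ϑ*)/(3 ψ''(ϑ*)²), and A₃ := (5/(18√2)) · ψ'''(ϑ*)²/ψ''(ϑ*)^{7/2} − (1/(6√2)) · ψ⁽⁴⁾(ϑ*)/ψ''(ϑ*)^{5/2}. Then, as ϑ → ϑ* from the right, ϑ − ϑ* = A₁ √(ψ(ϑ) − ψ(ϑ*)) + A₂ (ψ(ϑ) − ψ(ϑ*)) + A₃ (ψ(ϑ) − ψ(ϑ*))^{3/2} + o((ϑ − ϑ*)³). -/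

import Mathlib

open Real Filter Set

private lemma itdw_eq' {f : ℝ → ℝ} (hf : ContDiff ℝ 4 f) {s : Set ℝ} (hs : UniqueDiffOn ℝ s)
    {k : ℕ} (hk : k ≤ 4) : ∀ y ∈ s, iteratedDerivWithin k f s y = iteratedDeriv k f y := by
  induction k with
  | zero => intro y hy; simp [iteratedDerivWithin_zero, iteratedDeriv_zero]
  | succ k ih =>
    intro y hy
    rw [iteratedDerivWithin_succ, iteratedDeriv_succ]
    rw [derivWithin_congr (fun z hz => ih (by omega) z hz) (ih (by omega) y hy)]
    exact DifferentiableAt.derivWithin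
      (hf.differentiable_iteratedDeriv k (by exact_mod_cast by omega : (k:WithTop ℕ∞) < 4) y)
      (hs y hy)

private lemma rpow_three_halves' {x : ℝ} (hx : 0 ≤ x) : x ^ ((3:ℝ)/2) = (Real.sqrt x)^3 := by
  rw [show ((3:ℝ)/2) = (1/2)*3 by norm_num, Real.rpow_mul hx, Real.sqrt_eq_rpow,
    ← Real.rpow_natCast (x ^ ((1:ℝ)/2)) 3]
  norm_num

private lemma A3K_lemma {a b c A₃ : ℝ} (ha : 0 < a)
    (h : A₃ = (5/(18*Real.sqrt 2)) * (6*b)^2 / (2*a)^((7:ℝ)/2)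
      - (1/(6*Real.sqrt 2))*(24*c)/(2*a)^((5:ℝ)/2)) :
    A₃ * (Real.sqrt a)^3 = 5*b^2/(8*a^2) - c/(2*a) := by
  have h2a : (0:ℝ) < 2*a := by linarith
  have e7 : (2*a)^((7:ℝ)/2) = (2*a)^(3:ℕ) * Real.sqrt (2*a) := by
    rw [show (7:ℝ)/2 = (3:ℕ) + (1/2:ℝ) by norm_num, Real.rpow_add h2a, Real.rpow_natCast,
      ← Real.sqrt_eq_rpow]
  have e5 : (2*a)^((5:ℝ)/2) = (2*a)^(2:ℕ) * Real.sqrt (2*a) := by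
    rw [show (5:ℝ)/2 = (2:ℕ) + (1/2:ℝ) by norm_num, Real.rpow_add h2a, Real.rpow_natCast,
      ← Real.sqrt_eq_rpow]
  have hs : Real.sqrt (2*a) = Real.sqrt 2 * Real.sqrt a := Real.sqrt_mul (by norm_num) a
  have hsa : Real.sqrt a ^ 2 = a := Real.sq_sqrt ha.le
  have hs2 : Real.sqrt 2 ^ 2 = 2 := Real.sq_sqrt (by norm_num)
  have hsa0 : Real.sqrt a ≠ 0 := by positivity
  have hs20 : Real.sqrt 2 ≠ 0 := by positivity
  rw [h, e7, e5, hs]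
  field_simp
  ring_nf
  rw [show Real.sqrt 2 ^ 2 = 2 from hs2, show Real.sqrt a ^ 2 = a from hsa]
  ring_nf

private lemma taylor_E_tendsto (g : ℝ → ℝ) (ϑstar a b c : ℝ) (hg : ContDiff ℝ 4 g)
    (hd1 : iteratedDeriv 1 g ϑstar = 0)
    (hd2 : iteratedDeriv 2 g ϑstar = 2*a) (hd3 : iteratedDeriv 3 g ϑstar = 6*b)
    (hd4 : iteratedDeriv 4 g ϑstar = 24*c) :
    Tendsto (fun t => (g t - g ϑstar - a*(t-ϑstar)^2 - b*(t-ϑstar)^3 - c*(t-ϑstar)^4)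
      /(t-ϑstar)^4) (nhdsWithin ϑstar (Ioi ϑstar)) (nhds 0) := by
  rw [NormedAddCommGroup.tendsto_nhds_zero]
  intro ε hε
  have hc : ContinuousAt (iteratedDeriv 4 g) ϑstar :=
    (hg.continuous_iteratedDeriv 4 le_rfl).continuousAt
  obtain ⟨δ₁, hδ₁, hcont⟩ := Metric.continuousAt_iff.mp hc (24*ε) (by positivity)
  filter_upwards [Ioo_mem_nhdsGT (by linarith : ϑstar < ϑstar + δ₁)]
    with t ht
  obtain ⟨ht1, ht2⟩ := ht
  have hudiff := uniqueDiffOn_Icc ht1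
  have hICc : ContDiffOn ℝ 3 g (Icc ϑstar t) := (hg.of_le (by norm_num)).contDiffOn
  have hdiff : DifferentiableOn ℝ (iteratedDerivWithin 3 g (Icc ϑstar t)) (Ioo ϑstar t) := by
    apply DifferentiableOn.congr
      ((hg.differentiable_iteratedDeriv 3 (by norm_num)).differentiableOn)
    exact fun y hy => itdw_eq' hg hudiff (by norm_num) y (Ioo_subset_Icc_self hy)
  obtain ⟨ξ, hξ, hT⟩ := taylor_mean_remainder_lagrange (n := 3) ht1.ne
    (by rwa [uIcc_of_le ht1.le]) (by rwa [uIcc_of_le ht1.le, uIoo_of_le ht1.le])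
  rw [uIcc_of_le ht1.le] at hT
  rw [uIoo_of_le ht1.le] at hξ
  have hmem : ϑstar ∈ Icc ϑstar t := left_mem_Icc.mpr ht1.le
  have hξI : ξ ∈ Icc ϑstar t := Ioo_subset_Icc_self hξ
  rw [itdw_eq' hg hudiff (k := 4) (by norm_num) ξ hξI] at hT
  rw [taylor_within_apply] at hT
  simp only [Finset.sum_range_succ, Finset.sum_range_zero,
    itdw_eq' hg hudiff (k := 0) (by norm_num) ϑstar hmem,
    itdw_eq' hg hudiff (k := 1) (by norm_num) ϑstar hmem,
    itdw_eq' hg hudiff (k := 2) (by norm_num) ϑstar hmem,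
    itdw_eq' hg hudiff (k := 3) (by norm_num) ϑstar hmem,
    iteratedDeriv_zero, hd1, hd2, hd3, smul_eq_mul] at hT
  norm_num [Nat.factorial] at hT
  have hht : (t - ϑstar) ≠ 0 := by linarith [ht1]
  have hEt : (g t - g ϑstar - a*(t-ϑstar)^2 - b*(t-ϑstar)^3 - c*(t-ϑstar)^4)/(t-ϑstar)^4
      = (iteratedDeriv 4 g ξ - iteratedDeriv 4 g ϑstar)/24 := by
    rw [hd4]
    field_simp
    linear_combination 24 * hT
  rw [hEt]
  have hdist : dist ξ ϑstar < δ₁ := by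
    rw [Real.dist_eq, abs_of_pos (by linarith [hξ.1] : (0:ℝ) < ξ - ϑstar)]
    linarith [hξ.2]
  have hd := hcont hdist
  rw [Real.dist_eq] at hd
  rw [Real.norm_eq_abs, abs_div, abs_of_pos (by norm_num : (0:ℝ) < 24)]
  linarith [hd]

private lemma pointwise_key' {a b c K A₁ A₂ A₃ e h pp Δ : ℝ} (ha : 0 < a) (hh : 0 < h)
    (hap : a * pp = b + (c + e) * h)
    (hΔ : Δ = a * (1 + h * pp) * h^2)
    (h1u : 0 ≤ 1 + h * pp)
    (hA₁a : A₁ * Real.sqrt a = 1)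
    (hA₂ : A₂ = -b/(2*a^2))
    (hA₃K : A₃ * (Real.sqrt a)^3 = K) :
    (h - (A₁ * Real.sqrt Δ + A₂ * Δ + A₃ * Δ ^ ((3:ℝ)/2))) / h^3
      = -(c + e)/(2*a) + b*pp/(2*a) + pp^2/8 - K * (Real.sqrt (1+h*pp))^3
        - h*pp^3*(Real.sqrt (1+h*pp) + 3)/(8*(Real.sqrt (1+h*pp) + 1)^3) := by
  have ha' : a ≠ 0 := ha.ne'
  have hh' : h ≠ 0 := hh.ne'
  set v := Real.sqrt (1+h*pp) with hv
  have hv0 : 0 ≤ v := Real.sqrt_nonneg _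
  have hv2 : v^2 = 1 + h*pp := Real.sq_sqrt h1u
  have hΔ0 : 0 ≤ Δ := by rw [hΔ]; positivity
  have hsq : Real.sqrt Δ = Real.sqrt a * v * h := by
    rw [hΔ, show a*(1+h*pp)*h^2 = (a*(1+h*pp))*h^2 by ring, Real.sqrt_mul (by positivity),
      Real.sqrt_sq hh.le, Real.sqrt_mul ha.le]
  have hrp : Δ ^ ((3:ℝ)/2) = (Real.sqrt a * v * h)^3 := by
    rw [rpow_three_halves' hΔ0, hsq]
  rw [hsq, hrp, hΔ, hA₂,
    show A₁ * (Real.sqrt a * v * h) = (A₁ * Real.sqrt a)*(v*h) by ring, hA₁a,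
    show A₃ * (Real.sqrt a * v * h)^3 = (A₃*(Real.sqrt a)^3)*(v^3*h^3) by ring, hA₃K]
  have hv1 : v + 1 ≠ 0 := by positivity
  have hppv : pp = (v^2 - 1)/h := by rw [hv2]; field_simp; ring
  have hev : e = (a*((v^2-1)/h) - b)/h - c := by
    rw [← hppv]; field_simp; linarith [hap]
  rw [hppv, hev]
  field_simp
  ring

private lemma main_alg' (g : ℝ → ℝ) (ϑstar a b c K A₁ A₂ A₃ : ℝ) (E : ℝ → ℝ) (ha : 0 < a)
    (hE : Tendsto E (nhdsWithin ϑstar (Ioi ϑstar)) (nhds 0))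
    (hEeq : ∀ t, t ≠ ϑstar →
      g t - g ϑstar = a*(t-ϑstar)^2 + b*(t-ϑstar)^3 + (c + E t)*(t-ϑstar)^4)
    (hA₁a : A₁ * Real.sqrt a = 1) (hA₂ : A₂ = -b/(2*a^2))
    (hA₃K : A₃ * (Real.sqrt a)^3 = K)
    (hK : K = 5*b^2/(8*a^2) - c/(2*a)) :
    Tendsto (fun ϑ => (ϑ - ϑstar - (A₁ * Real.sqrt (g ϑ - g ϑstar) + A₂ * (g ϑ - g ϑstar)
        + A₃ * (g ϑ - g ϑstar) ^ ((3:ℝ)/2))) / (ϑ - ϑstar)^3)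
      (nhdsWithin ϑstar (Ioi ϑstar)) (nhds 0) := by
  have ha' : a ≠ 0 := ha.ne'
  have hsub : Tendsto (fun t : ℝ => t - ϑstar) (nhdsWithin ϑstar (Ioi ϑstar)) (nhds 0) := by
    have h1 : Tendsto (fun t : ℝ => t - ϑstar) (nhds ϑstar) (nhds (ϑstar - ϑstar)) :=
      (continuous_id.sub continuous_const).tendsto ϑstar
    rw [sub_self] at h1
    exact h1.mono_left nhdsWithin_le_nhds
  have hP : Tendsto (fun t => (b + (c + E t)*(t-ϑstar))/a)
      (nhdsWithin ϑstar (Ioi ϑstar)) (nhds ((b + (c+0)*0)/a)) :=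
    (tendsto_const_nhds.add ((tendsto_const_nhds.add hE).mul hsub)).div_const a
  rw [show ((b + (c+0)*0)/a) = b/a by ring] at hP
  have hu : Tendsto (fun t => 1 + (t-ϑstar)*((b + (c + E t)*(t-ϑstar))/a))
      (nhdsWithin ϑstar (Ioi ϑstar)) (nhds (1 + 0*(b/a))) :=
    tendsto_const_nhds.add (hsub.mul hP)
  rw [show (1 + 0*(b/a) : ℝ) = 1 by ring] at hu
  have hV : Tendsto (fun t => Real.sqrt (1 + (t-ϑstar)*((b + (c + E t)*(t-ϑstar))/a)))
      (nhdsWithin ϑstar (Ioi ϑstar)) (nhds 1) := by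
    have h2 := (Real.continuous_sqrt.tendsto 1).comp hu
    rwa [Real.sqrt_one] at h2
  have h1 : Tendsto (fun t => -(c + E t)/(2*a)) (nhdsWithin ϑstar (Ioi ϑstar))
      (nhds (-(c+0)/(2*a))) := ((tendsto_const_nhds.add hE).neg).div_const (2*a)
  have h2 : Tendsto (fun t => b*((b + (c + E t)*(t-ϑstar))/a)/(2*a))
      (nhdsWithin ϑstar (Ioi ϑstar)) (nhds (b*(b/a)/(2*a))) :=
    (tendsto_const_nhds.mul hP).div_const (2*a)
  have h3 : Tendsto (fun t => ((b + (c + E t)*(t-ϑstar))/a)^2/8)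
      (nhdsWithin ϑstar (Ioi ϑstar)) (nhds ((b/a)^2/8)) := (hP.pow 2).div_const 8
  have h4 : Tendsto (fun t => K * (Real.sqrt (1 + (t-ϑstar)*((b + (c + E t)*(t-ϑstar))/a)))^3)
      (nhdsWithin ϑstar (Ioi ϑstar)) (nhds (K * 1^3)) := tendsto_const_nhds.mul (hV.pow 3)
  have h5 : Tendsto (fun t => (t-ϑstar)*((b + (c + E t)*(t-ϑstar))/a)^3
        * (Real.sqrt (1 + (t-ϑstar)*((b + (c + E t)*(t-ϑstar))/a)) + 3)
      / (8*(Real.sqrt (1 + (t-ϑstar)*((b + (c + E t)*(t-ϑstar))/a)) + 1)^3))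
      (nhdsWithin ϑstar (Ioi ϑstar)) (nhds (0*(b/a)^3*(1+3)/(8*(1+1)^3))) :=
    Tendsto.div ((hsub.mul (hP.pow 3)).mul (hV.add tendsto_const_nhds))
      (tendsto_const_nhds.mul ((hV.add tendsto_const_nhds).pow 3)) (by norm_num)
  have hΦ0 := (((h1.add h2).add h3).sub h4).sub h5
  rw [show (-(c+0)/(2*a) + b*(b/a)/(2*a) + (b/a)^2/8 - K*1^3 - 0*(b/a)^3*(1+3)/(8*(1+1)^3)) = 0
    from by rw [hK]; field_simp; ring] at hΦ0
  apply hΦ0.congr'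
  have hev : ∀ᶠ t in nhdsWithin ϑstar (Ioi ϑstar),
      0 < 1 + (t-ϑstar)*((b + (c + E t)*(t-ϑstar))/a) :=
    hu.eventually (eventually_gt_nhds zero_lt_one)
  filter_upwards [hev, self_mem_nhdsWithin] with t hpos ht
  have hht : ϑstar < t := ht
  have hap : a * ((b + (c + E t)*(t-ϑstar))/a) = b + (c + E t)*(t-ϑstar) := by field_simp
  have hΔ : g t - g ϑstar = a*(1+(t-ϑstar)*((b + (c + E t)*(t-ϑstar))/a))*(t-ϑstar)^2 := by
    rw [hEeq t (ne_of_gt hht)]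
    linear_combination (-(t-ϑstar)^3) * hap
  exact (pointwise_key' ha (sub_pos.mpr hht) hap hΔ hpos.le hA₁a hA₂ hA₃K).symm

/-- Inverted Taylor expansion at the minimizer `ϑ*` of `ψ`:
`ϑ − ϑ* = A₁ √(ψ(ϑ)−ψ(ϑ*)) + A₂ (ψ(ϑ)−ψ(ϑ*)) + A₃ (ψ(ϑ)−ψ(ϑ*))^{3/2} + o((ϑ−ϑ*)³)`
as `ϑ → ϑ*` from the right. -/
theorem inverted_taylor_expansion
    (ψ : ℝ → ℝ) (ϑstar A₁ A₂ A₃ : ℝ)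
    (hsmooth : ∃ U ∈ nhds ϑstar, ContDiffOn ℝ 4 ψ U)
    (hderiv : iteratedDeriv 1 ψ ϑstar = 0)
    (hderiv2 : 0 < iteratedDeriv 2 ψ ϑstar)
    (hA₁ : A₁ = Real.sqrt (2 / iteratedDeriv 2 ψ ϑstar))
    (hA₂ : A₂ = -(iteratedDeriv 3 ψ ϑstar) / (3 * (iteratedDeriv 2 ψ ϑstar) ^ 2))
    (hA₃ : A₃ = (5 / (18 * Real.sqrt 2)) * (iteratedDeriv 3 ψ ϑstar) ^ 2
          / (iteratedDeriv 2 ψ ϑstar) ^ ((7 : ℝ) / 2)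
        - (1 / (6 * Real.sqrt 2)) * iteratedDeriv 4 ψ ϑstar
          / (iteratedDeriv 2 ψ ϑstar) ^ ((5 : ℝ) / 2)) :
    Tendsto
      (fun ϑ => (ϑ - ϑstar - (A₁ * Real.sqrt (ψ ϑ - ψ ϑstar) + A₂ * (ψ ϑ - ψ ϑstar)
          + A₃ * (ψ ϑ - ψ ϑstar) ^ ((3 : ℝ) / 2))) / (ϑ - ϑstar) ^ 3)
      (nhdsWithin ϑstar (Ioi ϑstar)) (nhds 0) := by
  -- Step 1: replace ψ by a globally C⁴ function g agreeing with ψ near ϑstar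
  obtain ⟨g, hg, hgψ⟩ : ∃ g : ℝ → ℝ, ContDiff ℝ 4 g ∧ g =ᶠ[nhds ϑstar] ψ := by
    obtain ⟨U, hU, hψU⟩ := hsmooth
    have hUo : interior U ∈ nhds ϑstar := interior_mem_nhds.mpr hU
    obtain ⟨δ, hδ, hball⟩ := Metric.mem_nhds_iff.mp hUo
    set bump : ContDiffBump ϑstar := ⟨δ/3, δ/2, by positivity, by linarith⟩ with hbump
    refine ⟨fun x => bump x * ψ x, ?_, ?_⟩
    · rw [contDiff_iff_contDiffAt]
      intro x
      by_cases hx : x ∈ Metric.ball ϑstar δ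
      · have hUx : U ∈ nhds x :=
          mem_nhds_iff.mpr ⟨interior U, interior_subset, isOpen_interior, hball hx⟩
        exact bump.contDiffAt.mul (hψU.contDiffAt hUx)
      · have hopen : IsOpen (Metric.closedBall ϑstar (δ/2))ᶜ := Metric.isClosed_closedBall.isOpen_compl
        have hxmem : x ∈ (Metric.closedBall ϑstar (δ/2))ᶜ := by
          simp only [mem_compl_iff, Metric.mem_closedBall, not_le]
          by_contra hcon
          push_neg at hcon
          exact hx (Metric.mem_ball.mpr (by linarith))
        have hevz : ∀ᶠ y in nhds x, bump y * ψ y = 0 := by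
          filter_upwards [hopen.mem_nhds hxmem] with y hy
          have hy' : δ/2 < dist y ϑstar := by
            simpa [Metric.mem_closedBall, not_le] using hy
          have hb0 : bump y = 0 := bump.zero_of_le_dist hy'.le
          simp [hb0]
        exact (contDiffAt_const (c := (0:ℝ))).congr_of_eventuallyEq hevz
    · filter_upwards [bump.eventuallyEq_one] with y hy
      simp [hy]
  have hiter : ∀ k : ℕ, iteratedDeriv k g ϑstar = iteratedDeriv k ψ ϑstar :=
    fun k => hgψ.iteratedDeriv_eq k
  obtain ⟨a, hd2⟩ : ∃ a, iteratedDeriv 2 ψ ϑstar = 2*a := ⟨iteratedDeriv 2 ψ ϑstar / 2, by ring⟩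
  obtain ⟨b, hd3⟩ : ∃ b, iteratedDeriv 3 ψ ϑstar = 6*b := ⟨iteratedDeriv 3 ψ ϑstar / 6, by ring⟩
  obtain ⟨c, hd4⟩ : ∃ c, iteratedDeriv 4 ψ ϑstar = 24*c :=
    ⟨iteratedDeriv 4 ψ ϑstar / 24, by ring⟩
  have ha : 0 < a := by rw [hd2] at hderiv2; linarith
  have ha' : a ≠ 0 := ha.ne'
  have hE := taylor_E_tendsto g ϑstar a b c hg ((hiter 1).trans hderiv)
    ((hiter 2).trans hd2) ((hiter 3).trans hd3) ((hiter 4).trans hd4)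
  have hEeq : ∀ t, t ≠ ϑstar → g t - g ϑstar = a*(t-ϑstar)^2 + b*(t-ϑstar)^3
      + (c + (fun t => (g t - g ϑstar - a*(t-ϑstar)^2 - b*(t-ϑstar)^3 - c*(t-ϑstar)^4)
          /(t-ϑstar)^4) t)*(t-ϑstar)^4 := by
    intro t ht
    have h4 : (t-ϑstar)^4 ≠ 0 := pow_ne_zero _ (sub_ne_zero.mpr ht)
    field_simp
    ring
  have hA₁a : A₁ * Real.sqrt a = 1 := by
    rw [hA₁, hd2, ← Real.sqrt_mul (by positivity) a, show 2/(2*a)*a = 1 by field_simp,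
      Real.sqrt_one]
  have hA₂' : A₂ = -b/(2*a^2) := by
    rw [hA₂, hd2, hd3]; field_simp; ring
  have hA₃K : A₃ * (Real.sqrt a)^3 = 5*b^2/(8*a^2) - c/(2*a) := by
    apply A3K_lemma ha
    rw [hA₃, hd2, hd3, hd4]
  have hmain := main_alg' g ϑstar a b c (5*b^2/(8*a^2) - c/(2*a)) A₁ A₂ A₃ _ ha hE hEeq
    hA₁a hA₂' hA₃K rfl
  apply hmain.congr'
  filter_upwards [hgψ.filter_mono nhdsWithin_le_nhds] with t htg
  rw [htg, hgψ.eq_of_nhds]
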